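/- Let θ>0, σ>0, μ∈ℝ, x≥0 and δ>0. Set r=√(μ²+2θσ²), κ₊=(μ+r)/σ² and κ₋=(μ−r)/σ². Suppose E,I∈ℝ satisfy, for both κ=κ₊ and κ=κ₋, the equation (e^{−κ(x+δ)} + κ(x+δ) + μκ/θ)·E + θκ·I = e^{−κx} + κx + μκ/θ. Then E = e^{δμ/σ²}·( r·cosh(x·r/σ²) + μ·sinh(x·r/σ²) ) / ( r·cosh((x+δ)·r/σ²) + μ·sinh((x+δ)·r/σ²) ). -/
import Mathlib

theorem stmt_10 (θ σ μ x δ : ℝ) (hθ : 0 < θ) (hσ : 0 < σ)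
    (hx : 0 ≤ x) (hδ : 0 < δ)
    (r κp κm : ℝ)
    (hr : r = Real.sqrt (μ ^ 2 + 2 * θ * σ ^ 2))
    (hκp : κp = (μ + r) / σ ^ 2)
    (hκm : κm = (μ - r) / σ ^ 2)
    (E I : ℝ)
    (hsys : ∀ κ ∈ ({κp, κm} : Set ℝ),
      (Real.exp (-κ * (x + δ)) + κ * (x + δ) + μ * κ / θ) * E + θ * κ * I
        = Real.exp (-κ * x) + κ * x + μ * κ / θ) :
    E = Real.exp (δ * μ / σ ^ 2) *
      (r * Real.cosh (x * r / σ ^ 2) + μ * Real.sinh (x * r / σ ^ 2)) /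
      (r * Real.cosh ((x + δ) * r / σ ^ 2) + μ * Real.sinh ((x + δ) * r / σ ^ 2)) := by
  set s := σ ^ 2 with hs
  have hs0 : 0 < s := by positivity
  -- r > |μ|
  have hrabs : |μ| < r := by
    rw [hr, ← Real.sqrt_sq_eq_abs]
    exact Real.sqrt_lt_sqrt (sq_nonneg μ) (by nlinarith)
  have hr0 : 0 < r := lt_of_le_of_lt (abs_nonneg μ) hrabs
  -- positivity of D t := r * cosh t + μ * sinh t
  have hD : ∀ t : ℝ, 0 < r * Real.cosh t + μ * Real.sinh t := by
    intro t
    have hc : 1 ≤ Real.cosh t := Real.one_le_cosh t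
    have hsq : Real.cosh t ^ 2 = Real.sinh t ^ 2 + 1 := by
      have := Real.cosh_sq t; linarith [this]
    have h1 : 0 < Real.cosh t + Real.sinh t := by nlinarith
    have h2 : 0 < Real.cosh t - Real.sinh t := by nlinarith
    have hm1 : -r < μ := by cases abs_lt.mp hrabs; linarith
    have hm2 : μ < r := by cases abs_lt.mp hrabs; linarith
    nlinarith [mul_pos (show (0:ℝ) < r + μ by linarith) h1,
      mul_pos (show (0:ℝ) < r - μ by linarith) h2]
  -- expansion lemma
  have expand : ∀ z : ℝ, κm * Real.exp (-κp * z) - κp * Real.exp (-κm * z)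
      = -(2 / s) * Real.exp (-(μ * z) / s)
        * (r * Real.cosh (z * r / s) + μ * Real.sinh (z * r / s)) := by
    intro z
    have e1 : Real.exp (-κp * z) = Real.exp (-(μ * z) / s) * Real.exp (-(z * r / s)) := by
      rw [← Real.exp_add]; congr 1; rw [hκp]; ring
    have e2 : Real.exp (-κm * z) = Real.exp (-(μ * z) / s) * Real.exp (z * r / s) := by
      rw [← Real.exp_add]; congr 1; rw [hκm]; ring
    rw [e1, e2, Real.cosh_eq, Real.sinh_eq, hκp, hκm]
    ring
  have h1 := hsys κp (by left; rfl)
  have h2 := hsys κm (by right; rfl)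
  have key : (κm * Real.exp (-κp * (x + δ)) - κp * Real.exp (-κm * (x + δ))) * E
      = κm * Real.exp (-κp * x) - κp * Real.exp (-κm * x) := by
    linear_combination κm * h1 - κp * h2
  rw [expand, expand] at key
  set Dx := r * Real.cosh (x * r / s) + μ * Real.sinh (x * r / s) with hDx
  set Dy := r * Real.cosh ((x + δ) * r / s) + μ * Real.sinh ((x + δ) * r / s) with hDy
  set ux := Real.exp (-(μ * x) / s) with hux
  set uy := Real.exp (-(μ * (x + δ)) / s) with huy
  have hux' : ux = Real.exp (δ * μ / s) * uy := by
    rw [hux, huy, ← Real.exp_add]; congr 1; ring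
  have hDy0 : 0 < Dy := hD _
  have huy0 : 0 < uy := Real.exp_pos _
  have key2 : E * Dy = Real.exp (δ * μ / s) * Dx := by
    have h3 : E * Dy * (-(2 / s) * uy) = Real.exp (δ * μ / s) * Dx * (-(2 / s) * uy) := by
      linear_combination key + (-(2/s) * Dx) * hux'
    have hne : (-(2 / s) * uy) ≠ 0 := by
      have : (0:ℝ) < 2 / s := by positivity
      nlinarith [this, huy0, mul_pos this huy0]
    exact mul_right_cancel₀ hne h3
  field_simp
  linarith [key2]
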